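/- No post-selection free n-cycle quantum paradoxes (Corollary 24, quantum trace form): Let m be a nonempty finite type, n ≥ 2, and let Q_0, …, Q_{n−1} ∈ Matrix m m ℂ be orthogonal projections such that each cyclically adjacent pair commutes: Q_i * Q_{i+1 mod n} = Q_{i+1 mod n} * Q_i for all i. For b : Bool write Q_i^b := Q_i if b = true and Q_i^b := 1 − Q_i if b = false. Let ρ ∈ Matrix m m ℂ be positive semidefinite with Tr ρ = 1. Then there is no v : Fin n → Bool such that: for every i = 0, …, n−2, Tr(Q_i^{v_i} * Q_{i+1}^{¬v_{i+1}} * ρ) = 0 and Tr(Q_i^{¬v_i} * Q_{i+1}^{v_{i+1}} * ρ) = 0, and for the closing edge, Tr(Q_{n−1}^{v_{n−1}} * Q_0^{v_0} * ρ) = 0 and Tr(Q_{n−1}^{¬v_{n−1}} * Q_0^{¬v_0} * ρ) = 0. -/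

import Mathlib

open Matrix
open scoped ComplexOrder

/-- The projector onto the binary outcome `b` of the measurement with `true`-outcome
projector `Q`: it is `Q` for `b = true` and `1 - Q` for `b = false`. -/
noncomputable def projPow {m : Type*} [Fintype m] [DecidableEq m]
    (Q : Matrix m m ℂ) (b : Bool) : Matrix m m ℂ :=
  if b then Q else 1 - Q

section Aux

variable {m : Type*} [Fintype m] [DecidableEq m]

lemma aux_trace_ctms_eq_zero {A : Matrix m m ℂ} (h : (Aᴴ * A).trace = 0) : A = 0 := by
  have h' : ∑ j, ∑ i, star (A i j) * A i j = 0 := by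
    simpa [Matrix.trace, Matrix.diag, Matrix.mul_apply, Matrix.conjTranspose_apply] using h
  have hnn : ∀ j ∈ Finset.univ, (0:ℂ) ≤ ∑ i, star (A i j) * A i j := fun j _ =>
    Finset.sum_nonneg fun i _ => star_mul_self_nonneg _
  have h2 := (Finset.sum_eq_zero_iff_of_nonneg hnn).mp h'
  ext i j
  have h3 : star (A i j) * A i j = 0 := (Finset.sum_eq_zero_iff_of_nonneg
    (fun i _ => star_mul_self_nonneg (A i j))).mp (h2 j (Finset.mem_univ _)) i (Finset.mem_univ _)
  have h4 : (Complex.normSq (A i j) : ℂ) = 0 := by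
    rw [Complex.normSq_eq_conj_mul_self]; exact h3
  simpa using Complex.normSq_eq_zero.mp (Complex.ofReal_eq_zero.mp h4)

open scoped MatrixOrder in
lemma proj_mul_rho_eq_zero {A ρ : Matrix m m ℂ} (hA : Aᴴ = A) (hA2 : A * A = A)
    (hρ : ρ.PosSemidef) (h : (A * ρ).trace = 0) : A * ρ = 0 := by
  set B := CFC.sqrt ρ with hB
  have hBH : Bᴴ = B := (Matrix.nonneg_iff_posSemidef.mp (CFC.sqrt_nonneg ρ)).1
  have hBB : B * B = ρ := CFC.sqrt_mul_sqrt_self ρ hρ.nonneg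
  have key : (A * B)ᴴ * (A * B) = B * (A * B) := by
    rw [conjTranspose_mul, hA, hBH, Matrix.mul_assoc, ← Matrix.mul_assoc A A B, hA2]
  have htr0 : ((A * B)ᴴ * (A * B)).trace = 0 := by
    rw [key, ← Matrix.mul_assoc, Matrix.trace_mul_cycle, hBB, Matrix.trace_mul_comm]
    exact h
  have hAB : A * B = 0 := aux_trace_ctms_eq_zero htr0
  calc A * ρ = A * B * B := by rw [Matrix.mul_assoc, hBB]
    _ = 0 := by rw [hAB, Matrix.zero_mul]

lemma projPow_not (Q : Matrix m m ℂ) (b : Bool) : projPow Q (!b) = 1 - projPow Q b := by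
  cases b <;> simp [projPow]

lemma projPow_herm {Q : Matrix m m ℂ} (h : Qᴴ = Q) (b : Bool) : (projPow Q b)ᴴ = projPow Q b := by
  cases b <;> simp [projPow, conjTranspose_sub, h]

lemma projPow_idem {Q : Matrix m m ℂ} (h : Q * Q = Q) (b : Bool) :
    projPow Q b * projPow Q b = projPow Q b := by
  cases b <;> simp [projPow, Matrix.mul_sub, Matrix.sub_mul, h] <;> abel

lemma projPow_comm {P R : Matrix m m ℂ} (h : P * R = R * P) (b b' : Bool) :
    projPow P b * projPow R b' = projPow R b' * projPow P b := by
  cases b <;> cases b' <;>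
    simp [projPow, Matrix.mul_sub, Matrix.sub_mul, h] <;> abel

lemma pair_proj {P R : Matrix m m ℂ} (hP : Pᴴ = P) (hP2 : P * P = P)
    (hR : Rᴴ = R) (hR2 : R * R = R) (hc : P * R = R * P) (b b' : Bool) :
    (projPow P b * projPow R b')ᴴ = projPow P b * projPow R b' ∧
    (projPow P b * projPow R b') * (projPow P b * projPow R b') = projPow P b * projPow R b' := by
  constructor
  · rw [conjTranspose_mul, projPow_herm hP, projPow_herm hR, ← projPow_comm hc]
  · rw [Matrix.mul_assoc, ← Matrix.mul_assoc (projPow R b'), ← projPow_comm hc,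
      Matrix.mul_assoc, projPow_idem hR2, ← Matrix.mul_assoc, projPow_idem hP2]

end Aux

/-- **No post-selection free `n`-cycle quantum paradoxes** (Corollary 24, quantum
trace form).  For cyclically commuting orthogonal projections `Q_0, …, Q_{n-1}` and
a normalized positive semidefinite state `ρ`, there is no Boolean assignment `v`
making every non-closing edge perfectly correlated with `v` and the closing edge
perfectly anti-correlated with `v`. -/
theorem no_postselection_free_ncycle_quantum_paradox
    {m : Type*} [Fintype m] [DecidableEq m] [Nonempty m]
    (n : ℕ) (hn : 2 ≤ n) (Q : Fin n → Matrix m m ℂ)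
    (hproj : ∀ i, (Q i)ᴴ = Q i ∧ Q i * Q i = Q i)
    (hcomm : ∀ i : Fin n, Q i * Q (i + ⟨1, by omega⟩) = Q (i + ⟨1, by omega⟩) * Q i)
    (ρ : Matrix m m ℂ) (hρ : ρ.PosSemidef) (htr : ρ.trace = 1) :
    ¬ ∃ v : Fin n → Bool,
        (∀ i : Fin n, ∀ h : (i : ℕ) + 1 < n,
          (projPow (Q i) (v i) * projPow (Q ⟨(i : ℕ) + 1, h⟩) (!(v ⟨(i : ℕ) + 1, h⟩)) * ρ).trace = 0 ∧
          (projPow (Q i) (!(v i)) * projPow (Q ⟨(i : ℕ) + 1, h⟩) (v ⟨(i : ℕ) + 1, h⟩) * ρ).trace = 0) ∧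
        (∀ i : Fin n, (i : ℕ) + 1 = n →
          (projPow (Q i) (v i) * projPow (Q ⟨0, by omega⟩) (v ⟨0, by omega⟩) * ρ).trace = 0 ∧
          (projPow (Q i) (!(v i)) * projPow (Q ⟨0, by omega⟩) (!(v ⟨0, by omega⟩)) * ρ).trace = 0) := by
  rintro ⟨v, hv, hclose⟩
  -- commutation for any adjacent pair and bools
  have hQc : ∀ (i j : Fin n), i + ⟨1, by omega⟩ = j → ∀ b b',
      (projPow (Q i) b * projPow (Q j) b')ᴴ = projPow (Q i) b * projPow (Q j) b' ∧
      (projPow (Q i) b * projPow (Q j) b') * (projPow (Q i) b * projPow (Q j) b')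
        = projPow (Q i) b * projPow (Q j) b' := by
    rintro i j rfl b b'
    exact pair_proj (hproj i).1 (hproj i).2 (hproj _).1 (hproj _).2 (hcomm i) b b'
  -- step: from two zero traces, get P_i ρ = P_{i+1} ρ (both edges)
  have step : ∀ (i j : Fin n), i + ⟨1, by omega⟩ = j →
      (projPow (Q i) (v i) * projPow (Q j) (!(v j)) * ρ).trace = 0 →
      (projPow (Q i) (!(v i)) * projPow (Q j) (v j) * ρ).trace = 0 →
      projPow (Q i) (v i) * ρ = projPow (Q j) (v j) * ρ := by
    intro i j hij h1 h2
    have z1 : projPow (Q i) (v i) * projPow (Q j) (!(v j)) * ρ = 0 := by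
      obtain ⟨ha, hb⟩ := hQc i j hij (v i) (!(v j))
      exact proj_mul_rho_eq_zero ha hb hρ h1
    have z2 : projPow (Q i) (!(v i)) * projPow (Q j) (v j) * ρ = 0 := by
      obtain ⟨ha, hb⟩ := hQc i j hij (!(v i)) (v j)
      exact proj_mul_rho_eq_zero ha hb hρ h2
    -- P_i ρ = P_i P_j ρ
    have e1 : projPow (Q i) (v i) * ρ = projPow (Q i) (v i) * (projPow (Q j) (v j) * ρ) := by
      have := z1
      rw [projPow_not, Matrix.mul_sub, Matrix.mul_one, Matrix.sub_mul, sub_eq_zero] at this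
      rw [this, Matrix.mul_assoc]
    have e2 : projPow (Q j) (v j) * ρ = projPow (Q i) (v i) * (projPow (Q j) (v j) * ρ) := by
      have := z2
      rw [projPow_not, Matrix.sub_mul, Matrix.sub_mul, Matrix.one_mul, sub_eq_zero] at this
      rw [← Matrix.mul_assoc, ← this]
    rw [e1, ← e2]
  -- all P_i ρ equal P_0 ρ
  have h0 : (0:ℕ) < n := by omega
  have chain : ∀ k (hk : k < n),
      projPow (Q ⟨k, hk⟩) (v ⟨k, hk⟩) * ρ = projPow (Q ⟨0, h0⟩) (v ⟨0, h0⟩) * ρ := by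
    intro k
    induction k with
    | zero => intro hk; rfl
    | succ k ih =>
      intro hk
      have hk' : k < n := by omega
      have hij : (⟨k, hk'⟩ : Fin n) + ⟨1, by omega⟩ = ⟨k + 1, hk⟩ := by
        apply Fin.ext
        simp [Fin.add_def, Nat.mod_eq_of_lt hk]
      have hlt : ((⟨k, hk'⟩ : Fin n) : ℕ) + 1 < n := hk
      obtain ⟨h1, h2⟩ := hv ⟨k, hk'⟩ hlt
      rw [← step ⟨k, hk'⟩ ⟨k + 1, hk⟩ hij h1 h2]
      exact ih hk'
  -- closing edge
  have hn1 : n - 1 < n := by omega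
  set i : Fin n := ⟨n - 1, hn1⟩
  have hieq : (i : ℕ) + 1 = n := by simp only [i]; omega
  obtain ⟨c1, c2⟩ := hclose i hieq
  have z1 : projPow (Q i) (v i) * projPow (Q ⟨0, h0⟩) (v ⟨0, h0⟩) * ρ = 0 := by
    have hij : i + ⟨1, by omega⟩ = ⟨0, h0⟩ := by
      apply Fin.ext
      rw [Fin.add_def]
      show ((n - 1) + 1) % n = 0
      have hx : n - 1 + 1 = n := by omega
      rw [hx, Nat.mod_self]
    obtain ⟨ha, hb⟩ := hQc i ⟨0, h0⟩ hij (v i) (v ⟨0, h0⟩)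
    exact proj_mul_rho_eq_zero ha hb hρ c1
  have z2 : projPow (Q i) (!(v i)) * projPow (Q ⟨0, h0⟩) (!(v ⟨0, h0⟩)) * ρ = 0 := by
    have hij : i + ⟨1, by omega⟩ = ⟨0, h0⟩ := by
      apply Fin.ext
      rw [Fin.add_def]
      show ((n - 1) + 1) % n = 0
      have hx : n - 1 + 1 = n := by omega
      rw [hx, Nat.mod_self]
    obtain ⟨ha, hb⟩ := hQc i ⟨0, h0⟩ hij (!(v i)) (!(v ⟨0, h0⟩))
    exact proj_mul_rho_eq_zero ha hb hρ c2
  have heq : projPow (Q i) (v i) * ρ = projPow (Q ⟨0, h0⟩) (v ⟨0, h0⟩) * ρ := chain (n - 1) hn1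
  have z1' : projPow (Q i) (v i) * (projPow (Q ⟨0, h0⟩) (v ⟨0, h0⟩) * ρ) = 0 := by
    rw [← Matrix.mul_assoc]; exact z1
  have hP0 : projPow (Q ⟨0, h0⟩) (v ⟨0, h0⟩) * ρ = 0 := by
    have hidem : projPow (Q i) (v i) * (projPow (Q i) (v i) * ρ) = projPow (Q i) (v i) * ρ := by
      rw [← Matrix.mul_assoc, projPow_idem (hproj i).2]
    rw [← heq, hidem, heq] at z1'
    exact z1'
  have hPi : projPow (Q i) (v i) * ρ = 0 := by rw [heq]; exact hP0
  have e0 : projPow (Q ⟨0, h0⟩) (!(v ⟨0, h0⟩)) * ρ = ρ := by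
    rw [projPow_not, Matrix.sub_mul, Matrix.one_mul, hP0, sub_zero]
  have hrho : ρ = 0 := by
    have h := z2
    rw [Matrix.mul_assoc, e0, projPow_not, Matrix.sub_mul, Matrix.one_mul, hPi, sub_zero] at h
    exact h
  rw [hrho] at htr
  simp at htr
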